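/- Let S : ℝ^d → V(m) be measurable, Q a cube partitioned into measurable sets A₁,…,A_N with η := min_j |A_j|/|Q| > 0. Suppose there exists δ > 0 such that for each j, each x ∈ A_j and each v ∈ S(x), there is k ≠ j with |⟨v,w⟩| ≤ (1−δ)|v||w| for all w ∈ S(y) and all y ∈ A_k. Then ω(Q,S) ≥ sqrt(δη). -/

import Mathlib

open MeasureTheory
open scoped InnerProductSpace

noncomputable instance {m : ℕ} : MeasurableSpace (EuclideanSpace ℂ (Fin m)) := borel _
instance {m : ℕ} : BorelSpace (EuclideanSpace ℂ (Fin m)) := ⟨rfl⟩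

/-- The axis-parallel cube in `ℝ^d` with lower corner `x` and side length `ℓ`. -/
def Cube {d : ℕ} (x : Fin d → ℝ) (ℓ : ℝ) : Set (Fin d → ℝ) :=
  {y | ∀ i, y i ∈ Set.Icc (x i) (x i + ℓ)}

/-- A subspace-valued mapping `S : ℝ^d → V(m)` is measurable if it is spanned pointwise by
finitely many measurable vector-valued functions. -/
def MeasSubspaceMap {d m : ℕ}
    (S : (Fin d → ℝ) → Submodule ℂ (EuclideanSpace ℂ (Fin m))) : Prop :=
  ∃ (k : ℕ) (v : Fin k → (Fin d → ℝ) → EuclideanSpace ℂ (Fin m)),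
    (∀ i, Measurable (v i)) ∧ ∀ x, S x = Submodule.span ℂ (Set.range fun i => v i x)

/-- The unit sections of `S` on `Q`: measurable `v` with `v(x) ∈ S(x)` and `|v(x)| = 1`
a.e. on `Q`. -/
def unitSections {d m : ℕ} (Q : Set (Fin d → ℝ))
    (S : (Fin d → ℝ) → Submodule ℂ (EuclideanSpace ℂ (Fin m))) :
    Set ((Fin d → ℝ) → EuclideanSpace ℂ (Fin m)) :=
  {v | Measurable v ∧ ∀ᵐ x ∂(volume.restrict Q), v x ∈ S x ∧ ‖v x‖ = 1}

/-- The average `(1/|Q|) ∫_Q v`. -/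
noncomputable def avg {d m : ℕ} (Q : Set (Fin d → ℝ))
    (v : (Fin d → ℝ) → EuclideanSpace ℂ (Fin m)) : EuclideanSpace ℂ (Fin m) :=
  (volume Q).toReal⁻¹ • ∫ y in Q, v y

/-- The oscillation `ω(Q,S)` of a subspace-valued mapping on a cube. -/
noncomputable def osc {d m : ℕ} (Q : Set (Fin d → ℝ))
    (S : (Fin d → ℝ) → Submodule ℂ (EuclideanSpace ℂ (Fin m))) : ℝ :=
  sInf ((fun v => Real.sqrt ((volume Q).toReal⁻¹ * ∫ y in Q, ‖v y - avg Q v‖ ^ 2)) ''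
    unitSections Q S)

lemma exists_unit_section {d m : ℕ}
    (S : (Fin d → ℝ) → Submodule ℂ (EuclideanSpace ℂ (Fin m)))
    (hS : MeasSubspaceMap S) (hnt : ∀ x, S x ≠ ⊥) :
    ∃ u : (Fin d → ℝ) → EuclideanSpace ℂ (Fin m),
      Measurable u ∧ ∀ x, u x ∈ S x ∧ ‖u x‖ = 1 := by
  obtain ⟨k, v, hvmeas, hvspan⟩ := hS
  have hex : ∀ x, ∃ i, v i x ≠ 0 := by
    intro x
    by_contra h
    push_neg at h
    apply hnt x
    rw [hvspan x, ← le_bot_iff]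
    have : (Set.range fun i => v i x) ⊆ {0} := by
      rintro _ ⟨i, rfl⟩; simp [h i]
    calc Submodule.span ℂ (Set.range fun i => v i x) ≤ Submodule.span ℂ {0} :=
          Submodule.span_mono this
      _ = ⊥ := by simp
  classical
  set B : Fin k → Set (Fin d → ℝ) :=
    fun i => {x | v i x ≠ 0 ∧ ∀ j < i, v j x = 0} with hB
  have hBmeas : ∀ i, MeasurableSet (B i) := by
    intro i
    have h1 : MeasurableSet {x | v i x ≠ 0} := by
      have := (hvmeas i) (measurableSet_singleton (0 : EuclideanSpace ℂ (Fin m)))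
      simpa [Set.preimage, Set.compl_setOf] using this.compl
    have h2 : MeasurableSet {x | ∀ j < i, v j x = 0} := by
      have : {x | ∀ j < i, v j x = 0} = ⋂ j ∈ {j : Fin k | j < i}, (v j)⁻¹' {0} := by
        ext y; simp
      rw [this]
      exact MeasurableSet.biInter (Set.to_countable _)
        (fun j _ => (hvmeas j) (measurableSet_singleton 0))
    have : B i = {x | v i x ≠ 0} ∩ {x | ∀ j < i, v j x = 0} := by
      ext y; simp [hB]
    rw [this]; exact h1.inter h2
  refine ⟨fun x => ∑ i, (B i).indicator (fun x => ‖v i x‖⁻¹ • v i x) x, ?_, ?_⟩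
  · exact Finset.measurable_sum _ fun i _ =>
      (((hvmeas i).norm.inv).smul (hvmeas i)).indicator (hBmeas i)
  · intro x
    obtain ⟨i, hi⟩ := hex x
    set F : Finset (Fin k) := Finset.univ.filter (fun i => v i x ≠ 0) with hF
    have hFne : F.Nonempty := ⟨i, by simp [hF, hi]⟩
    set i₀ := F.min' hFne with hi₀
    have hi₀F : i₀ ∈ F := F.min'_mem hFne
    have hvi₀ : v i₀ x ≠ 0 := by simpa [hF] using hi₀F
    have hxB : x ∈ B i₀ := by
      refine ⟨hvi₀, fun j hj => ?_⟩
      by_contra hvj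
      exact absurd (F.min'_le j (by simp [hF, hvj])) (not_le.mpr hj)
    have hsum : (∑ i', (B i').indicator (fun x => ‖v i' x‖⁻¹ • v i' x) x)
        = ‖v i₀ x‖⁻¹ • v i₀ x := by
      rw [Finset.sum_eq_single i₀]
      · rw [Set.indicator_of_mem hxB]
      · intro b _ hb
        rw [Set.indicator_of_notMem]
        intro hxBb
        rcases lt_or_gt_of_ne hb with hlt | hgt
        · exact absurd (F.min'_le b (by simp [hF, hxBb.1])) (not_le.mpr hlt)
        · exact hvi₀ (hxBb.2 i₀ hgt)
      · intro h; exact absurd (Finset.mem_univ i₀) h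
    simp only []
    rw [hsum]
    constructor
    · refine (S x).smul_of_tower_mem _ ?_
      rw [hvspan x]
      exact Submodule.subset_span ⟨i₀, rfl⟩
    · rw [norm_smul]
      simp [norm_inv, inv_mul_cancel₀ (norm_ne_zero_iff.mpr hvi₀)]


set_option maxHeartbeats 1000000 in
/-- Quantitative lower bound for the oscillation: if `Q` is partitioned into measurable
sets `A₁, …, A_N` each of relative measure at least `η`, and for each `j`, `x ∈ A_j`,
`v ∈ S(x)` there is `k ≠ j` with `|⟨v,w⟩| ≤ (1−δ)|v||w|` for all `w ∈ S(y)`, `y ∈ A_k`,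
then `ω(Q,S) ≥ sqrt(δη)`. -/
theorem stmt_8 {d m N : ℕ} (S : (Fin d → ℝ) → Submodule ℂ (EuclideanSpace ℂ (Fin m)))
    (hS : MeasSubspaceMap S) (hnt : ∀ x, S x ≠ ⊥)
    (x : Fin d → ℝ) (ℓ : ℝ) (hℓ : 0 < ℓ)
    (A : Fin N → Set (Fin d → ℝ))
    (hAmeas : ∀ j, MeasurableSet (A j))
    (hAdisj : Pairwise (Function.onFun Disjoint A))
    (hAcover : (⋃ j, A j) = Cube x ℓ)
    (η : ℝ) (hη : 0 < η)
    (hηle : ∀ j, η ≤ (volume (A j)).toReal / (volume (Cube x ℓ)).toReal)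
    (δ : ℝ) (hδ : 0 < δ)
    (hangle : ∀ j, ∀ y ∈ A j, ∀ v ∈ S y, ∃ k ≠ j, ∀ z ∈ A k, ∀ w ∈ S z,
      ‖(inner ℂ v w : ℂ)‖ ≤ (1 - δ) * ‖v‖ * ‖w‖) :
    Real.sqrt (δ * η) ≤ osc (Cube x ℓ) S := by
  classical
  set Q := Cube x ℓ with hQdef
  have hQpi : Q = Set.pi Set.univ (fun i => Set.Icc (x i) (x i + ℓ)) := by
    ext y; simp [hQdef, Cube, Set.mem_pi, Pi.le_def, forall_and]
  have hQmeas : MeasurableSet Q := by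
    rw [hQpi]; exact MeasurableSet.univ_pi fun i => measurableSet_Icc
  have hQvol : volume Q = (ENNReal.ofReal ℓ) ^ d := by
    rw [hQpi, volume_pi_pi]; simp [Real.volume_Icc]
  have hQpos : volume Q ≠ 0 := by
    rw [hQvol]; exact pow_ne_zero _ (by simp [ENNReal.ofReal_eq_zero, not_le, hℓ])
  have hQfin : volume Q ≠ ⊤ := by
    rw [hQvol]; exact ENNReal.pow_ne_top ENNReal.ofReal_ne_top
  set μQ := (volume Q).toReal with hμQ
  have hμQpos : 0 < μQ := ENNReal.toReal_pos hQpos hQfin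
  set ν := volume.restrict Q with hν
  haveI : IsFiniteMeasure ν := ⟨by
    rw [hν, Measure.restrict_apply_univ]; exact hQfin.lt_top⟩
  have hAsub : ∀ j, A j ⊆ Q := fun j => hAcover ▸ Set.subset_iUnion A j
  -- nonemptiness
  obtain ⟨u₀, hu₀meas, hu₀⟩ := exists_unit_section S hS hnt
  have hne : ((fun v => Real.sqrt ((volume Q).toReal⁻¹ * ∫ y in Q, ‖v y - avg Q v‖ ^ 2)) ''
      unitSections Q S).Nonempty :=
    ⟨_, Set.mem_image_of_mem _ ⟨hu₀meas, Filter.Eventually.of_forall hu₀⟩⟩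
  apply le_csInf hne
  rintro r ⟨u, ⟨humeas, huae⟩, rfl⟩
  set a := avg Q u with ha
  -- basic integrability
  have huasm : AEStronglyMeasurable u ν := humeas.aestronglyMeasurable
  have hu_int : Integrable u ν := by
    refine (integrable_const (1:ℝ)).mono' huasm (huae.mono fun y hy => ?_)
    rw [hy.2]
  have h_int_u : ∫ y in Q, u y = μQ • a := by
    rw [ha, avg, ← hμQ, smul_smul, mul_inv_cancel₀ hμQpos.ne', one_smul]
  -- pointwise a.e. bound
  have hb : ∀ᵐ y ∂ν, RCLike.re (⟪a, u y⟫_ℂ) ≤ 1 - δ * η := by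
    filter_upwards [huae, ae_restrict_mem hQmeas] with y hy hyQ
    obtain ⟨j, hyA⟩ := Set.mem_iUnion.mp (hAcover ▸ hyQ : y ∈ ⋃ j, A j)
    obtain ⟨kk, hkkj, hbound⟩ := hangle j y hyA (u y) hy.1
    have hint_inner : Integrable (fun z => (⟪u y, u z⟫_ℂ)) ν := by
      refine (integrable_const (1:ℝ)).mono' (measurable_const.inner humeas).aestronglyMeasurable
        (huae.mono fun z hz => ?_)
      calc ‖(⟪u y, u z⟫_ℂ)‖ ≤ ‖u y‖ * ‖u z‖ := norm_inner_le_norm _ _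
        _ = 1 := by rw [hy.2, hz.2, one_mul]
    have hre_eq : RCLike.re (⟪a, u y⟫_ℂ) = μQ⁻¹ * ∫ z in Q, RCLike.re (⟪u y, u z⟫_ℂ) := by
      rw [ha, avg, ← hμQ]
      rw [RCLike.real_smul_eq_coe_smul (K := ℂ), inner_smul_left, RCLike.conj_ofReal,
        RCLike.re_ofReal_mul]
      congr 1
      rw [inner_re_symm]
      rw [← integral_inner hu_int, ← hν]
      exact (integral_re hint_inner).symm
    have hfmeas : Integrable (fun z => 1 - δ * (A kk).indicator (fun _ => (1:ℝ)) z) ν := by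
      refine (integrable_const (1:ℝ)).sub (Integrable.const_mul ?_ δ)
      exact (integrable_const (1:ℝ)).indicator (hAmeas kk)
    have hmono : ∫ z in Q, RCLike.re (⟪u y, u z⟫_ℂ) ≤
        ∫ z in Q, (1 - δ * (A kk).indicator (fun _ => (1:ℝ)) z) := by
      refine integral_mono_ae ?_ hfmeas ?_
      · refine (integrable_const (1:ℝ)).mono'
          ((RCLike.measurable_re.comp (measurable_const.inner humeas)).aestronglyMeasurable)
          (huae.mono fun z hz => ?_)
        calc ‖RCLike.re (⟪u y, u z⟫_ℂ)‖ ≤ ‖(⟪u y, u z⟫_ℂ)‖ := RCLike.norm_re_le_norm _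
          _ ≤ ‖u y‖ * ‖u z‖ := norm_inner_le_norm _ _
          _ = 1 := by rw [hy.2, hz.2, one_mul]
      · filter_upwards [huae] with z hz
        by_cases hzk : z ∈ A kk
        · rw [Set.indicator_of_mem hzk]
          calc RCLike.re (⟪u y, u z⟫_ℂ) ≤ ‖(⟪u y, u z⟫_ℂ)‖ := RCLike.re_le_norm _
            _ ≤ (1 - δ) * ‖u y‖ * ‖u z‖ := hbound z hzk (u z) hz.1
            _ = 1 - δ * 1 := by rw [hy.2, hz.2]; ring
        · rw [Set.indicator_of_notMem hzk]
          calc RCLike.re (⟪u y, u z⟫_ℂ) ≤ ‖(⟪u y, u z⟫_ℂ)‖ := RCLike.re_le_norm _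
            _ ≤ ‖u y‖ * ‖u z‖ := norm_inner_le_norm _ _
            _ = 1 - δ * 0 := by rw [hy.2, hz.2]; ring
    have hrhs : ∫ z in Q, (1 - δ * (A kk).indicator (fun _ => (1:ℝ)) z) =
        μQ - δ * (volume (A kk)).toReal := by
      rw [integral_sub (integrable_const _) (Integrable.const_mul
        ((integrable_const (1:ℝ)).indicator (hAmeas kk)) δ)]
      rw [integral_const_mul]
      rw [setIntegral_const]
      rw [integral_indicator (hAmeas kk)]
      rw [← hν, Measure.restrict_restrict (hAmeas kk),
        Set.inter_eq_self_of_subset_left (hAsub kk)]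
      simp [hμQ, measureReal_def]
    have hAk : η * μQ ≤ (volume (A kk)).toReal := by
      have := hηle kk
      calc η * μQ ≤ ((volume (A kk)).toReal / μQ) * μQ :=
            mul_le_mul_of_nonneg_right this hμQpos.le
        _ = (volume (A kk)).toReal := div_mul_cancel₀ _ hμQpos.ne'
    rw [hre_eq]
    calc μQ⁻¹ * ∫ z in Q, RCLike.re (⟪u y, u z⟫_ℂ)
        ≤ μQ⁻¹ * (μQ - δ * (volume (A kk)).toReal) := by
          refine mul_le_mul_of_nonneg_left ?_ (inv_nonneg.mpr hμQpos.le)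
          rw [← hrhs]; exact hmono
      _ ≤ μQ⁻¹ * (μQ - δ * (η * μQ)) := by
          refine mul_le_mul_of_nonneg_left ?_ (inv_nonneg.mpr hμQpos.le)
          have := mul_le_mul_of_nonneg_left hAk hδ.le
          linarith
      _ = 1 - δ * η := by field_simp
  -- integrability of y ↦ re ⟪a, u y⟫
  have hint_re_a : Integrable (fun y => RCLike.re (⟪a, u y⟫_ℂ)) ν := by
    refine (integrable_const ‖a‖).mono'
      ((RCLike.measurable_re.comp (measurable_const.inner humeas)).aestronglyMeasurable)
      (huae.mono fun y hy => ?_)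
    calc ‖RCLike.re (⟪a, u y⟫_ℂ)‖ ≤ ‖(⟪a, u y⟫_ℂ)‖ := RCLike.norm_re_le_norm _
      _ ≤ ‖a‖ * ‖u y‖ := norm_inner_le_norm _ _
      _ = ‖a‖ := by rw [hy.2, mul_one]
  -- integrability of y ↦ ⟪a, u y⟫
  have hint_inner_a : Integrable (fun y => (⟪a, u y⟫_ℂ)) ν := by
    refine (integrable_const ‖a‖).mono' (measurable_const.inner humeas).aestronglyMeasurable
      (huae.mono fun y hy => ?_)
    calc ‖(⟪a, u y⟫_ℂ)‖ ≤ ‖a‖ * ‖u y‖ := norm_inner_le_norm _ _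
      _ = ‖a‖ := by rw [hy.2, mul_one]
  have h1 : ∫ y in Q, RCLike.re (⟪a, u y⟫_ℂ) = μQ * ‖a‖ ^ 2 := by
    rw [integral_re hint_inner_a, integral_inner hu_int, h_int_u,
      RCLike.real_smul_eq_coe_smul (K := ℂ), inner_smul_right, RCLike.re_ofReal_mul,
      inner_self_eq_norm_sq]
  -- global bound on ‖a‖²
  have h_norm_a : ‖a‖ ^ 2 ≤ 1 - δ * η := by
    have h2 : ∫ y in Q, RCLike.re (⟪a, u y⟫_ℂ) ≤ ∫ y in Q, (1 - δ * η : ℝ) :=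
      integral_mono_ae hint_re_a (integrable_const _) hb
    rw [h1, setIntegral_const, measureReal_def, ← hμQ, smul_eq_mul] at h2
    exact le_of_mul_le_mul_left h2 hμQpos
  -- expand the oscillation integral
  have hpt : ∀ y, ‖u y - a‖ ^ 2 = ‖u y‖ ^ 2 - 2 * RCLike.re (⟪a, u y⟫_ℂ) + ‖a‖ ^ 2 := by
    intro y
    rw [norm_sub_sq (𝕜 := ℂ), inner_re_symm]
  have i1 : Integrable (fun y => ‖u y‖ ^ 2) ν := by
    refine (integrable_const (1:ℝ)).mono' (humeas.norm.pow_const 2).aestronglyMeasurable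
      (huae.mono fun y hy => ?_)
    rw [hy.2]; norm_num
  have i2 : Integrable (fun y => 2 * RCLike.re (⟪a, u y⟫_ℂ)) ν := hint_re_a.const_mul 2
  have hI1 : ∫ y in Q, ‖u y‖ ^ 2 = μQ := by
    rw [integral_congr_ae (g := fun _ => (1:ℝ)) (huae.mono fun y hy => by rw [hy.2]; norm_num)]
    rw [setIntegral_const, measureReal_def, ← hμQ, smul_eq_mul, mul_one]
  have hexp : ∫ y in Q, ‖u y - a‖ ^ 2 = μQ * (1 - ‖a‖ ^ 2) := by
    have e1 : ∫ y in Q, ‖u y - a‖ ^ 2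
        = ∫ y in Q, (‖u y‖ ^ 2 - 2 * RCLike.re (⟪a, u y⟫_ℂ) + ‖a‖ ^ 2) :=
      integral_congr_ae (Filter.Eventually.of_forall hpt)
    have e2 : ∫ y in Q, (‖u y‖ ^ 2 - 2 * RCLike.re (⟪a, u y⟫_ℂ) + ‖a‖ ^ 2)
        = (∫ y in Q, (‖u y‖ ^ 2 - 2 * RCLike.re (⟪a, u y⟫_ℂ)))
          + ∫ y in Q, (‖a‖ ^ 2 : ℝ) := by
      exact integral_add (i1.sub i2) (integrable_const _)
    have e3 : ∫ y in Q, (‖u y‖ ^ 2 - 2 * RCLike.re (⟪a, u y⟫_ℂ))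
        = (∫ y in Q, ‖u y‖ ^ 2) - ∫ y in Q, 2 * RCLike.re (⟪a, u y⟫_ℂ) :=
      integral_sub i1 i2
    rw [e1, e2, e3, hI1, integral_const_mul, h1, setIntegral_const, measureReal_def, ← hμQ, smul_eq_mul]
    ring
  -- conclude
  show Real.sqrt (δ * η) ≤ Real.sqrt ((volume Q).toReal⁻¹ * ∫ y in Q, ‖u y - avg Q u‖ ^ 2)
  apply Real.sqrt_le_sqrt
  rw [← ha, hexp, ← hμQ, inv_mul_cancel_left₀ hμQpos.ne']
  linarith
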